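/- Let G be a finite group acting on a finite set X, U = Z[X], and A the augmentation kernel. The G-equivariant map π: ∧²U → A defined by π(x ∧ x') = x - x' is surjective with kernel ∧²A, giving an exact sequence of G-lattices 0 → ∧²A → ∧²U → A → 0. -/

import Mathlib

open Function

section Core
variable (G : Type) [Group G]

/-- A map is `G`-equivariant. -/
def IsEquivMapP {M N : Type} [AddCommGroup M] [AddCommGroup N]
    [DistribMulAction G M] [DistribMulAction G N] (f : M → N) : Prop :=
  ∀ (g : G) (m : M), f (g • m) = g • f m

/-- `M` is a permutation `G`-lattice: it has a finite `ℤ`-basis permuted by `G`. -/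
def IsPermLat (M : Type) [AddCommGroup M] [DistribMulAction G M] : Prop :=
  ∃ (ι : Type) (_ : Fintype ι) (b : Module.Basis ι ℤ M) (σ : G → ι → ι),
    ∀ (g : G) (i : ι), g • (b i : M) = b (σ g i)

/-- `M` is a lattice: finitely generated and free over `ℤ`. -/
def IsLat (M : Type) [AddCommGroup M] : Prop := Module.Free ℤ M ∧ Module.Finite ℤ M

/-- A short exact sequence `0 → M → E → P → 0` of `G`-modules. -/
def ShortExactG (M E P : Type) [AddCommGroup M] [AddCommGroup E] [AddCommGroup P]
    [DistribMulAction G M] [DistribMulAction G E] [DistribMulAction G P] : Prop :=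
  ∃ (i : M →+ E) (p : E →+ P), IsEquivMapP G i ∧ IsEquivMapP G p ∧
    Injective i ∧ Surjective p ∧ i.range = p.ker

/-- Colliot-Thélène–Sansuc equivalence of `G`-lattices. -/
def LatEquiv (M N : Type) [AddCommGroup M] [AddCommGroup N]
    [DistribMulAction G M] [DistribMulAction G N] : Prop :=
  ∃ (E : Type) (_ : AddCommGroup E) (_ : DistribMulAction G E)
    (P : Type) (_ : AddCommGroup P) (_ : DistribMulAction G P)
    (Q : Type) (_ : AddCommGroup Q) (_ : DistribMulAction G Q),
    IsLat E ∧ IsPermLat G P ∧ IsPermLat G Q ∧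
    ShortExactG G M E P ∧ ShortExactG G N E Q

/-- `M` is stably permutation. -/
def IsStablyPerm (M : Type) [AddCommGroup M] [DistribMulAction G M] : Prop :=
  ∃ (P : Type) (_ : AddCommGroup P) (_ : DistribMulAction G P)
    (Q : Type) (_ : AddCommGroup Q) (_ : DistribMulAction G Q),
    IsPermLat G P ∧ IsPermLat G Q ∧
    ∃ e : (M × P) ≃+ Q, IsEquivMapP G e

/-- `M` is permutation projective: a direct summand of a permutation lattice. -/
def IsPermProj (M : Type) [AddCommGroup M] [DistribMulAction G M] : Prop :=
  ∃ (P : Type) (_ : AddCommGroup P) (_ : DistribMulAction G P), IsPermLat G P ∧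
    ∃ (i : M →+ P) (r : P →+ M), IsEquivMapP G i ∧ IsEquivMapP G r ∧ ∀ m, r (i m) = m

/-- `M` is quasi-permutation: it embeds into a permutation lattice with permutation quotient. -/
def IsQuasiPerm (M : Type) [AddCommGroup M] [DistribMulAction G M] : Prop :=
  ∃ (P : Type) (_ : AddCommGroup P) (_ : DistribMulAction G P)
    (Q : Type) (_ : AddCommGroup Q) (_ : DistribMulAction G Q),
    IsPermLat G P ∧ IsPermLat G Q ∧ ShortExactG G M P Q

variable (M : Type) [AddCommGroup M] [DistribMulAction G M]

/-- 1-cocycles. -/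
def Z1 : AddSubgroup (G → M) where
  carrier := {f | ∀ g h : G, f (g * h) = g • f h + f g}
  zero_mem' := by intro g h; simp
  add_mem' := by
    intro f f' hf hf' g h
    simp only [Pi.add_apply, hf g h, hf' g h, smul_add]; abel
  neg_mem' := by
    intro f hf g h
    simp only [Pi.neg_apply, hf g h, smul_neg]; abel

/-- The coboundary homomorphism. -/
def coboundHom : M →+ Z1 G M where
  toFun m := ⟨fun g => g • m - m, by intro g h; simp only [mul_smul, smul_sub]; abel⟩
  map_zero' := by apply Subtype.ext; funext g; simp
  map_add' := by
    intro a b; apply Subtype.ext; funext g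
    show g • (a + b) - (a + b) = (g • a - a) + (g • b - b)
    simp only [smul_add]; abel

/-- 1-coboundaries. -/
def B1 : AddSubgroup (Z1 G M) := (coboundHom G M).range

/-- First group cohomology `H¹(G, M)`. -/
abbrev H1 := Z1 G M ⧸ B1 G M

/-- Restriction of cocycles to a subgroup. -/
def resZ1 (H : Subgroup G) : Z1 G M →+ Z1 H M where
  toFun f := ⟨fun h => f.1 h, by
    intro a b
    have := f.2 (a : G) (b : G)
    exact this⟩
  map_zero' := rfl
  map_add' := fun _ _ => rfl

/-- Restriction on `H¹`. -/
def resH1 (H : Subgroup G) : H1 G M →+ H1 H M :=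
  QuotientAddGroup.map _ _ (resZ1 G M H) (by
    rintro _ ⟨m, rfl⟩
    exact ⟨m, Subtype.ext rfl⟩)

/-- `Ш¹(G, M)`. -/
def Sha1 : AddSubgroup (H1 G M) :=
  ⨅ g : G, (resH1 G M (Subgroup.zpowers g)).ker

/-- `M` is coflasque: `H¹(H, M) = 0` for all subgroups `H ≤ G`. -/
def IsCoflasque : Prop := ∀ H : Subgroup G, ∀ x y : H1 H M, x = y

end Core

section Core2
variable (G : Type) [Group G] (M : Type) [AddCommGroup M] [DistribMulAction G M]

/-- 2-cocycles. -/
def Z2 : AddSubgroup (G → G → M) where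
  carrier := {f | ∀ g h k : G, g • f h k - f (g * h) k + f g (h * k) - f g h = 0}
  zero_mem' := by intro g h k; simp
  add_mem' := by
    intro f f' hf hf' g h k
    have h1 := hf g h k; have h2 := hf' g h k
    simp only [Pi.add_apply, smul_add]
    calc g • f h k + g • f' h k - (f (g * h) k + f' (g * h) k) +
          (f g (h * k) + f' g (h * k)) - (f g h + f' g h)
        = (g • f h k - f (g * h) k + f g (h * k) - f g h) +
          (g • f' h k - f' (g * h) k + f' g (h * k) - f' g h) := by abel
      _ = 0 := by rw [h1, h2, add_zero]
  neg_mem' := by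
    intro f hf g h k
    have h1 := hf g h k
    simp only [Pi.neg_apply, smul_neg]
    calc -(g • f h k) - -f (g * h) k + -f g (h * k) - -f g h
        = -(g • f h k - f (g * h) k + f g (h * k) - f g h) := by abel
      _ = 0 := by rw [h1, neg_zero]

/-- The 2-coboundary homomorphism. -/
def cobound2Hom : (G → M) →+ Z2 G M where
  toFun u := ⟨fun g h => g • u h - u (g * h) + u g, by
    intro g h k
    simp only [mul_smul, smul_sub, smul_add, mul_assoc]
    abel⟩
  map_zero' := by apply Subtype.ext; funext g h; simp
  map_add' := by
    intro a b; apply Subtype.ext; funext g h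
    show g • (a h + b h) - (a (g * h) + b (g * h)) + (a g + b g)
        = (g • a h - a (g * h) + a g) + (g • b h - b (g * h) + b g)
    simp only [smul_add]; abel

/-- 2-coboundaries. -/
def B2 : AddSubgroup (Z2 G M) := (cobound2Hom G M).range

/-- Second group cohomology `H²(G, M)`. -/
abbrev H2 := Z2 G M ⧸ B2 G M

/-- Restriction of 2-cocycles to a subgroup. -/
def resZ2 (H : Subgroup G) : Z2 G M →+ Z2 H M where
  toFun f := ⟨fun a b => f.1 a b, by
    intro a b c
    have := f.2 (a : G) (b : G) (c : G)
    exact this⟩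
  map_zero' := rfl
  map_add' := fun _ _ => rfl

/-- Restriction on `H²`. -/
def resH2 (H : Subgroup G) : H2 G M →+ H2 H M :=
  QuotientAddGroup.map _ _ (resZ2 G M H) (by
    rintro _ ⟨u, rfl⟩
    exact ⟨fun h : H => u (h : G), Subtype.ext rfl⟩)

/-- `Ш²(G, M)`. -/
def Sha2 : AddSubgroup (H2 G M) :=
  ⨅ g : G, (resH2 G M (Subgroup.zpowers g)).ker

/-- The subgroup `2M`. -/
def twoSub : AddSubgroup M :=
  (AddMonoidHom.mk' (fun m : M => (2 : ℤ) • m) (by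
    intro a b
    show (2 : ℤ) • (a + b) = (2 : ℤ) • a + (2 : ℤ) • b
    rw [smul_add])).range

/-- `M/2M`. -/
abbrev ModTwo := M ⧸ twoSub M

noncomputable instance : SMul G (ModTwo M) :=
  ⟨fun g => QuotientAddGroup.map _ _ (DistribMulAction.toAddMonoidHom M g) (by
    rintro _ ⟨m, rfl⟩
    refine ⟨g • m, ?_⟩
    show (2 : ℤ) • (g • m) = g • ((2 : ℤ) • m)
    rw [smul_comm])⟩

theorem modTwo_smul_mk (g : G) (m : M) :
    g • (QuotientAddGroup.mk m : ModTwo M) = QuotientAddGroup.mk (g • m) := rfl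

noncomputable instance : DistribMulAction G (ModTwo M) where
  one_smul x := by
    obtain ⟨m, rfl⟩ := QuotientAddGroup.mk_surjective x
    rw [modTwo_smul_mk, one_smul]
  mul_smul g h x := by
    obtain ⟨m, rfl⟩ := QuotientAddGroup.mk_surjective x
    rw [modTwo_smul_mk, modTwo_smul_mk, modTwo_smul_mk, mul_smul]
  smul_zero g := map_zero (QuotientAddGroup.map _ _ (DistribMulAction.toAddMonoidHom M g) _)
  smul_add g x y := map_add (QuotientAddGroup.map _ _ (DistribMulAction.toAddMonoidHom M g) _) x y

variable [Finite G]

/-- Kernel of the norm map (for a finite group). -/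
def normKer : AddSubgroup M where
  carrier := {x | ∑ᶠ g : G, g • x = 0}
  zero_mem' := by simp
  add_mem' := by
    intro x y hx hy
    have hx' : ∑ᶠ g : G, g • x = 0 := hx
    have hy' : ∑ᶠ g : G, g • y = 0 := hy
    show ∑ᶠ g : G, g • (x + y) = 0
    simp only [smul_add]
    rw [finsum_add_distrib (Set.toFinite _) (Set.toFinite _), hx', hy', add_zero]
  neg_mem' := by
    intro x hx
    have hx' : ∑ᶠ g : G, g • x = 0 := hx
    show ∑ᶠ g : G, g • (-x) = 0
    simp only [smul_neg]
    rw [finsum_neg_distrib, hx', neg_zero]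

/-- The subgroup generated by elements `g • m - m`. -/
def augSub : AddSubgroup M := AddSubgroup.closure {x | ∃ (g : G) (m : M), x = g • m - m}

/-- Tate cohomology `Ĥ⁻¹(G, M)` (for a finite group `G`). -/
abbrev TateNeg1 := normKer G M ⧸ ((augSub G M).addSubgroupOf (normKer G M))

/-- `M` is flasque: `Ĥ⁻¹(H, M) = 0` for all subgroups `H ≤ G`. -/
def IsFlasque : Prop := ∀ H : Subgroup G, ∀ x y : TateNeg1 H M, x = y

end Core2

section Core3
variable (G : Type) [Group G]

/-- `M` is equivalent to a direct summand of a quasi-permutation `G`-lattice. -/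
def IsEquivSummandQP (M : Type) [AddCommGroup M] [DistribMulAction G M] : Prop :=
  ∃ (S : Type) (_ : AddCommGroup S) (_ : DistribMulAction G S)
    (D : Type) (_ : AddCommGroup D) (_ : DistribMulAction G D)
    (D' : Type) (_ : AddCommGroup D') (_ : DistribMulAction G D'),
    IsLat S ∧ IsQuasiPerm G S ∧ (∃ e : (D × D') ≃+ S, IsEquivMapP G e) ∧
    LatEquiv G M D

end Core3

section Tensor
open TensorProduct
variable (G : Type) [Group G] (M : Type) [AddCommGroup M] [DistribMulAction G M]

/-- The action of `g : G` as a `ℤ`-linear map. -/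
def gLin (g : G) : M →ₗ[ℤ] M := (DistribMulAction.toAddMonoidHom M g).toIntLinearMap

noncomputable instance tensorSMul : SMul G (M ⊗[ℤ] M) :=
  ⟨fun g => TensorProduct.map (gLin G M g) (gLin G M g)⟩

theorem tsmul_def (g : G) (x : M ⊗[ℤ] M) :
    g • x = TensorProduct.map (gLin G M g) (gLin G M g) x := rfl

theorem gLin_one : gLin G M 1 = LinearMap.id := by
  ext m; show (1 : G) • m = m; rw [one_smul]

theorem gLin_mul (g h : G) : gLin G M (g * h) = (gLin G M g).comp (gLin G M h) := by
  ext m; show (g * h) • m = g • h • m; rw [mul_smul]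

noncomputable instance tensorAct : DistribMulAction G (M ⊗[ℤ] M) where
  one_smul x := by rw [tsmul_def, gLin_one, TensorProduct.map_id]; rfl
  mul_smul g h x := by
    rw [tsmul_def, tsmul_def, tsmul_def, gLin_mul, TensorProduct.map_comp]; rfl
  smul_zero g := map_zero _
  smul_add g x y := map_add _ x y

/-- Generators of the symmetric relation. -/
def symSpan : Submodule ℤ (M ⊗[ℤ] M) :=
  Submodule.span ℤ {x | ∃ a b : M, x = a ⊗ₜ[ℤ] b - b ⊗ₜ[ℤ] a}

/-- Generators of the wedge relation. -/
def wedSpan : Submodule ℤ (M ⊗[ℤ] M) :=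
  Submodule.span ℤ {x | ∃ a : M, x = a ⊗ₜ[ℤ] a}

/-- The second symmetric power `Sym²M`. -/
abbrev Sym2Q := (M ⊗[ℤ] M) ⧸ symSpan M

/-- The second exterior power `∧²M`. -/
abbrev Wedge2Q := (M ⊗[ℤ] M) ⧸ wedSpan M

theorem symSpan_le_comap (g : G) :
    symSpan M ≤ (symSpan M).comap (TensorProduct.map (gLin G M g) (gLin G M g)) := by
  refine Submodule.span_le.2 ?_
  rintro _ ⟨a, b, rfl⟩
  show TensorProduct.map (gLin G M g) (gLin G M g) (a ⊗ₜ[ℤ] b - b ⊗ₜ[ℤ] a) ∈ symSpan M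
  rw [map_sub, TensorProduct.map_tmul, TensorProduct.map_tmul]
  exact Submodule.subset_span ⟨g • a, g • b, rfl⟩

theorem wedSpan_le_comap (g : G) :
    wedSpan M ≤ (wedSpan M).comap (TensorProduct.map (gLin G M g) (gLin G M g)) := by
  refine Submodule.span_le.2 ?_
  rintro _ ⟨a, rfl⟩
  show TensorProduct.map (gLin G M g) (gLin G M g) (a ⊗ₜ[ℤ] a) ∈ wedSpan M
  rw [TensorProduct.map_tmul]
  exact Submodule.subset_span ⟨g • a, rfl⟩

noncomputable instance sym2SMul : SMul G (Sym2Q M) :=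
  ⟨fun g => Submodule.mapQ _ _ (TensorProduct.map (gLin G M g) (gLin G M g))
    (symSpan_le_comap G M g)⟩

noncomputable instance wedge2SMul : SMul G (Wedge2Q M) :=
  ⟨fun g => Submodule.mapQ _ _ (TensorProduct.map (gLin G M g) (gLin G M g))
    (wedSpan_le_comap G M g)⟩

theorem sym2_smul_mk (g : G) (x : M ⊗[ℤ] M) :
    g • ((symSpan M).mkQ x) = (symSpan M).mkQ (g • x) :=
  Submodule.mapQ_apply _ _ _ _

theorem wedge2_smul_mk (g : G) (x : M ⊗[ℤ] M) :
    g • ((wedSpan M).mkQ x) = (wedSpan M).mkQ (g • x) :=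
  Submodule.mapQ_apply _ _ _ _

noncomputable instance sym2Act : DistribMulAction G (Sym2Q M) where
  one_smul x := by
    obtain ⟨y, rfl⟩ := (symSpan M).mkQ_surjective x
    rw [sym2_smul_mk, one_smul]
  mul_smul g h x := by
    obtain ⟨y, rfl⟩ := (symSpan M).mkQ_surjective x
    rw [sym2_smul_mk, sym2_smul_mk, sym2_smul_mk, mul_smul]
  smul_zero g := by
    have := sym2_smul_mk G M g 0
    simpa using this
  smul_add g x y := by
    obtain ⟨a, rfl⟩ := (symSpan M).mkQ_surjective x
    obtain ⟨b, rfl⟩ := (symSpan M).mkQ_surjective y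
    rw [← map_add, sym2_smul_mk, sym2_smul_mk, sym2_smul_mk, smul_add, map_add]

noncomputable instance wedge2Act : DistribMulAction G (Wedge2Q M) where
  one_smul x := by
    obtain ⟨y, rfl⟩ := (wedSpan M).mkQ_surjective x
    rw [wedge2_smul_mk, one_smul]
  mul_smul g h x := by
    obtain ⟨y, rfl⟩ := (wedSpan M).mkQ_surjective x
    rw [wedge2_smul_mk, wedge2_smul_mk, wedge2_smul_mk, mul_smul]
  smul_zero g := by
    have := wedge2_smul_mk G M g 0
    simpa using this
  smul_add g x y := by
    obtain ⟨a, rfl⟩ := (wedSpan M).mkQ_surjective x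
    obtain ⟨b, rfl⟩ := (wedSpan M).mkQ_surjective y
    rw [← map_add, wedge2_smul_mk, wedge2_smul_mk, wedge2_smul_mk, smul_add, map_add]

variable {M} {N : Type} [AddCommGroup N]

/-- The map `Sym²f` induced by a linear map `f`. -/
noncomputable def sym2Map (f : M →ₗ[ℤ] N) : Sym2Q M →ₗ[ℤ] Sym2Q N :=
  Submodule.mapQ _ _ (TensorProduct.map f f) (by
    refine Submodule.span_le.2 ?_
    rintro _ ⟨a, b, rfl⟩
    show TensorProduct.map f f (a ⊗ₜ[ℤ] b - b ⊗ₜ[ℤ] a) ∈ symSpan N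
    rw [map_sub, TensorProduct.map_tmul, TensorProduct.map_tmul]
    exact Submodule.subset_span ⟨f a, f b, rfl⟩)

/-- The map `∧²f` induced by a linear map `f`. -/
noncomputable def wedge2Map (f : M →ₗ[ℤ] N) : Wedge2Q M →ₗ[ℤ] Wedge2Q N :=
  Submodule.mapQ _ _ (TensorProduct.map f f) (by
    refine Submodule.span_le.2 ?_
    rintro _ ⟨a, rfl⟩
    show TensorProduct.map f f (a ⊗ₜ[ℤ] a) ∈ wedSpan N
    rw [TensorProduct.map_tmul]
    exact Submodule.subset_span ⟨f a, rfl⟩)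

end Tensor

section PermMod
variable (G : Type) [Group G] (X : Type) [MulAction G X]

/-- The permutation action on `ℤ[X] = X → ℤ`. -/
instance permSMul : SMul G (X → ℤ) := ⟨fun g f x => f (g⁻¹ • x)⟩

theorem perm_smul_def (g : G) (f : X → ℤ) (x : X) : (g • f) x = f (g⁻¹ • x) := rfl

instance permAct : DistribMulAction G (X → ℤ) where
  one_smul f := funext fun x => by rw [perm_smul_def, inv_one, one_smul]
  mul_smul g h f := funext fun x => by
    rw [perm_smul_def, perm_smul_def, perm_smul_def, mul_inv_rev, mul_smul]
  smul_zero g := rfl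
  smul_add g f f' := rfl

variable [Fintype X]

/-- The augmentation kernel `A = ker(ℤ[X] → ℤ)`. -/
def augKer : AddSubgroup (X → ℤ) where
  carrier := {f | ∑ x, f x = 0}
  zero_mem' := by simp
  add_mem' := by
    intro a b ha hb
    have ha' : ∑ x, a x = 0 := ha
    have hb' : ∑ x, b x = 0 := hb
    show ∑ x, (a x + b x) = 0
    rw [Finset.sum_add_distrib, ha', hb', add_zero]
  neg_mem' := by
    intro a ha
    have ha' : ∑ x, a x = 0 := ha
    show ∑ x, (-(a x)) = 0
    rw [Finset.sum_neg_distrib, ha', neg_zero]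

theorem smul_mem_augKer (g : G) (f : X → ℤ) (hf : f ∈ augKer X) :
    g • f ∈ augKer X := by
  have hf' : ∑ x, f x = 0 := hf
  show ∑ x, f (g⁻¹ • x) = 0
  exact (Equiv.sum_comp (MulAction.toPerm (g⁻¹ : G)) f).trans hf'

instance augKerSMul : SMul G (augKer X) :=
  ⟨fun g f => ⟨g • (f : X → ℤ), smul_mem_augKer G X g f f.2⟩⟩

theorem augKer_smul_def (g : G) (f : augKer X) :
    ((g • f : augKer X) : X → ℤ) = g • (f : X → ℤ) := rfl

instance augKerAct : DistribMulAction G (augKer X) where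
  one_smul f := Subtype.ext (by rw [augKer_smul_def, one_smul])
  mul_smul g h f := Subtype.ext (by
    rw [augKer_smul_def, augKer_smul_def, augKer_smul_def, mul_smul])
  smul_zero g := Subtype.ext (by
    rw [augKer_smul_def]
    show g • (0 : X → ℤ) = 0
    rw [smul_zero])
  smul_add g f f' := Subtype.ext (by
    show g • ((f : X → ℤ) + f') = g • (f : X → ℤ) + g • (f' : X → ℤ)
    rw [smul_add])

end PermMod

section P2sec
variable (G : Type) [Group G]

/-- The set of 2-element subsets of `X`. -/
def P2 (X : Type) [DecidableEq X] : Type := {s : Finset X // s.card = 2}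

noncomputable instance (X : Type) [DecidableEq X] [Fintype X] : Fintype (P2 X) := by
  unfold P2; infer_instance

instance p2SMul (X : Type) [DecidableEq X] [MulAction G X] : SMul G (P2 X) :=
  ⟨fun g s => ⟨s.1.image (fun x => g • x), by
    rw [Finset.card_image_of_injective _ (MulAction.injective g)]; exact s.2⟩⟩

theorem p2_smul_def (X : Type) [DecidableEq X] [MulAction G X] (g : G) (s : P2 X) :
    (g • s).1 = s.1.image (fun x => g • x) := rfl

instance p2Act (X : Type) [DecidableEq X] [MulAction G X] : MulAction G (P2 X) where
  one_smul s := Subtype.ext (by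
    rw [p2_smul_def]
    simp)
  mul_smul g h s := Subtype.ext (by
    simp only [p2_smul_def, Finset.image_image]
    refine Finset.image_congr ?_
    intro x _
    exact mul_smul g h x)

end P2sec

/-- The root lattice `A_{n-1}` as an `S_n`-lattice. -/
abbrev rootLat (n : ℕ) := augKer (Fin n)


/-- The element `x - x'` of the augmentation kernel. -/
def diffElt (X : Type) [Fintype X] [DecidableEq X] (x x' : X) : augKer X :=
  ⟨Pi.single x (1 : ℤ) - Pi.single x' (1 : ℤ), by
    have h : ∑ y, ((Pi.single x (1 : ℤ) : X → ℤ) y - (Pi.single x' (1 : ℤ) : X → ℤ) y) = 0 := by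
      rw [Finset.sum_sub_distrib]; simp
    exact h⟩


noncomputable section AuxSec
open TensorProduct
set_option linter.unusedSectionVars false

@[local instance 2000] private abbrev tiM (X : Type) : Module ℤ (X → ℤ) :=
  AddCommGroup.toIntModule _

variable {X : Type} [Fintype X] [DecidableEq X]

private theorem smul_apply' (c : ℤ) (f : X → ℤ) (x : X) : (c • f) x = c * f x := rfl

private theorem single_eq_smul (x : X) (c : ℤ) :
    Pi.single x c = c • (Pi.single x 1 : X → ℤ) := by
  funext y
  rw [smul_apply', Pi.single_apply, Pi.single_apply]
  split_ifs <;> ring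

private theorem sum_single_one (x : X) : ∑ y, (Pi.single x (1:ℤ) : X → ℤ) y = 1 := by
  simp [Pi.single_apply]

private theorem single_tmul_single (x y : X) (c d : ℤ) :
    (Pi.single x c ⊗ₜ[ℤ] Pi.single y d : (X → ℤ) ⊗[ℤ] (X → ℤ))
      = (c * d) • (Pi.single x 1 ⊗ₜ[ℤ] Pi.single y 1) := by
  rw [single_eq_smul x c, single_eq_smul y d, ← smul_tmul', tmul_smul, smul_smul]

private theorem wext {T : Type} [AddCommGroup T]
    (f g : Wedge2Q (X → ℤ) →+ T)
    (h : ∀ x y : X, f ((wedSpan (X → ℤ)).mkQ (Pi.single x 1 ⊗ₜ[ℤ] Pi.single y 1)) =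
      g ((wedSpan (X → ℤ)).mkQ (Pi.single x 1 ⊗ₜ[ℤ] Pi.single y 1))) (z : Wedge2Q (X → ℤ)) :
    f z = g z := by
  obtain ⟨t, rfl⟩ := (wedSpan (X → ℤ)).mkQ_surjective z
  induction t using TensorProduct.induction_on with
  | zero => simp
  | add a b ha hb => rw [map_add, map_add, map_add, ha, hb]
  | tmul a b =>
    rw [← Finset.univ_sum_single a, ← Finset.univ_sum_single b, sum_tmul]
    simp only [tmul_sum, map_sum]
    refine Finset.sum_congr rfl fun x _ => Finset.sum_congr rfl fun y _ => ?_
    rw [single_tmul_single, map_smul, map_zsmul, map_zsmul, h]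

/-- The bilinear map `(u, v) ↦ ε(v)•u - ε(u)•v`. -/
private def Bmap : (X → ℤ) →ₗ[ℤ] (X → ℤ) →ₗ[ℤ] (X → ℤ) :=
  LinearMap.mk₂ ℤ (fun u v => (∑ x, v x) • u - (∑ x, u x) • v)
    (fun u u' v => by
      simp only [Pi.add_apply, Finset.sum_add_distrib, smul_add, add_smul]
      abel)
    (fun c u v => by
      simp only [smul_apply', ← Finset.mul_sum, mul_smul, smul_sub]
      module)
    (fun u v v' => by
      simp only [Pi.add_apply, Finset.sum_add_distrib, smul_add, add_smul]
      abel)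
    (fun c v u => by
      simp only [smul_apply', ← Finset.mul_sum, mul_smul, smul_sub]
      module)

private def r0 : Wedge2Q (X → ℤ) →ₗ[ℤ] (X → ℤ) :=
  Submodule.liftQ _ (TensorProduct.lift Bmap) (by
    rw [wedSpan, Submodule.span_le]
    rintro _ ⟨a, rfl⟩
    change TensorProduct.lift Bmap (a ⊗ₜ[ℤ] a) = 0
    erw [TensorProduct.lift.tmul]
    exact sub_self _)

private theorem r0_mk (x y : X) :
    r0 ((wedSpan (X → ℤ)).mkQ (Pi.single x 1 ⊗ₜ[ℤ] Pi.single y 1)) =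
      Pi.single x 1 - Pi.single y 1 := by
  show (∑ x', (Pi.single y (1:ℤ) : X → ℤ) x') • (Pi.single x 1 : X → ℤ)
      - (∑ x', (Pi.single x (1:ℤ) : X → ℤ) x') • Pi.single y 1 = _
  rw [sum_single_one, sum_single_one, one_smul, one_smul]

private theorem pi_formula (π : Wedge2Q (X → ℤ) →+ augKer X)
    (hπ : ∀ x x' : X, π ((wedSpan (X → ℤ)).mkQ (Pi.single x 1 ⊗ₜ[ℤ] Pi.single x' 1)) =
        diffElt X x x')
    (z : Wedge2Q (X → ℤ)) : ((π z : augKer X) : X → ℤ) = r0 z := by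
  refine wext (((augKer X).subtype).comp π) r0.toAddMonoidHom (fun x y => ?_) z
  simp only [AddMonoidHom.comp_apply, hπ, LinearMap.toAddMonoidHom_coe]
  rw [r0_mk]
  rfl

private theorem augKer_coe_zsmul (c : ℤ) (a : augKer X) :
    ((c • a : augKer X) : X → ℤ) = c • (a : X → ℤ) := rfl

/-- The projection `U → A`, `u ↦ u - ε(u)·e₀`. -/
private def pmap (x₀ : X) : (X → ℤ) →ₗ[ℤ] augKer X where
  toFun u := ⟨u - (∑ x, u x) • Pi.single x₀ 1, by
    show ∑ x, (u - (∑ x, u x) • (Pi.single x₀ 1 : X → ℤ)) x = 0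
    simp only [Pi.sub_apply, smul_apply', Finset.sum_sub_distrib, ← Finset.mul_sum,
      sum_single_one, mul_one, sub_self]⟩
  map_add' u v := by
    apply Subtype.ext
    show (u + v) - (∑ x, (u + v) x) • (Pi.single x₀ 1 : X → ℤ)
        = (u - (∑ x, u x) • Pi.single x₀ 1) + (v - (∑ x, v x) • Pi.single x₀ 1)
    simp only [Pi.add_apply, Finset.sum_add_distrib, add_smul]
    abel
  map_smul' c u := by
    apply Subtype.ext
    rw [RingHom.id_apply, augKer_coe_zsmul]
    show (c • u) - (∑ x, (c • u) x) • (Pi.single x₀ 1 : X → ℤ)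
        = c • (u - (∑ x, u x) • Pi.single x₀ 1)
    simp only [smul_apply', ← Finset.mul_sum, mul_smul, smul_sub]

private theorem pmap_coe (x₀ : X) (u : X → ℤ) :
    ((pmap x₀ u : augKer X) : X → ℤ) = u - (∑ x, u x) • Pi.single x₀ 1 := rfl

private theorem p_j (x₀ : X) (a : augKer X) :
    pmap x₀ ((augKer X).subtype.toIntLinearMap a) = a := by
  apply Subtype.ext
  rw [pmap_coe]
  show (a : X → ℤ) - (∑ x, (a : X → ℤ) x) • Pi.single x₀ 1 = (a : X → ℤ)
  rw [show ∑ x, (a : X → ℤ) x = 0 from a.2, zero_smul, sub_zero]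

private theorem p_single (x₀ x : X) :
    ((pmap x₀ (Pi.single x 1) : augKer X) : X → ℤ) = Pi.single x 1 - Pi.single x₀ 1 := by
  rw [pmap_coe, sum_single_one, one_smul]

/-- The section `A → ∧²U`, `a ↦ a ∧ e₀`. -/
private def smap (x₀ : X) : augKer X →+ Wedge2Q (X → ℤ) where
  toFun a := (wedSpan (X → ℤ)).mkQ ((a : X → ℤ) ⊗ₜ[ℤ] Pi.single x₀ 1)
  map_zero' := by
    have h0 : ((0 : augKer X) : X → ℤ) = 0 := rfl
    simp only [h0, TensorProduct.zero_tmul, map_zero]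
  map_add' a b := by
    have hab : ((a + b : augKer X) : X → ℤ) = (a : X → ℤ) + b := rfl
    simp only [hab, TensorProduct.add_tmul, map_add]

private theorem wedge2Map_mk {M N : Type} [AddCommGroup M] [AddCommGroup N]
    (f : M →ₗ[ℤ] N) (t : M ⊗[ℤ] M) :
    wedge2Map f ((wedSpan M).mkQ t) = (wedSpan N).mkQ (TensorProduct.map f f t) :=
  Submodule.mapQ_apply _ _ _ _

private theorem r_i (x₀ : X) (z : Wedge2Q (augKer X)) :
    wedge2Map (pmap x₀) (wedge2Map ((augKer X).subtype.toIntLinearMap) z) = z := by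
  obtain ⟨t, rfl⟩ := (wedSpan (augKer X)).mkQ_surjective z
  induction t using TensorProduct.induction_on with
  | zero => simp
  | add a b ha hb => rw [map_add, map_add, map_add, ha, hb]
  | tmul a b =>
    rw [wedge2Map_mk, TensorProduct.map_tmul, wedge2Map_mk, TensorProduct.map_tmul, p_j, p_j]

private theorem pi_iota (π : Wedge2Q (X → ℤ) →+ augKer X)
    (hπ : ∀ x x' : X, π ((wedSpan (X → ℤ)).mkQ (Pi.single x 1 ⊗ₜ[ℤ] Pi.single x' 1)) =
        diffElt X x x')
    (z : Wedge2Q (augKer X)) :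
    π (wedge2Map ((augKer X).subtype.toIntLinearMap) z) = 0 := by
  apply Subtype.ext
  rw [pi_formula π hπ]
  show r0 (wedge2Map ((augKer X).subtype.toIntLinearMap) z) = 0
  obtain ⟨t, rfl⟩ := (wedSpan (augKer X)).mkQ_surjective z
  induction t using TensorProduct.induction_on with
  | zero => simp
  | add a b ha hb => rw [map_add, map_add, map_add, ha, hb, add_zero]
  | tmul a b =>
    rw [wedge2Map_mk, TensorProduct.map_tmul]
    show (∑ x, ((augKer X).subtype.toIntLinearMap b) x) • ((augKer X).subtype.toIntLinearMap a)
        - (∑ x, ((augKer X).subtype.toIntLinearMap a) x) • ((augKer X).subtype.toIntLinearMap b) = 0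
    rw [show ∑ x, ((augKer X).subtype.toIntLinearMap b) x = 0 from b.2,
      show ∑ x, ((augKer X).subtype.toIntLinearMap a) x = 0 from a.2, zero_smul, zero_smul, sub_zero]

private theorem key (π : Wedge2Q (X → ℤ) →+ augKer X)
    (hπ : ∀ x x' : X, π ((wedSpan (X → ℤ)).mkQ (Pi.single x 1 ⊗ₜ[ℤ] Pi.single x' 1)) =
        diffElt X x x')
    (x₀ : X) (z : Wedge2Q (X → ℤ)) :
    wedge2Map ((augKer X).subtype.toIntLinearMap) (wedge2Map (pmap x₀) z)
      = z - smap x₀ (π z) := by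
  have h := wext
    (((wedge2Map ((augKer X).subtype.toIntLinearMap)).toAddMonoidHom).comp
      (wedge2Map (pmap x₀)).toAddMonoidHom)
    (AddMonoidHom.id _ - (smap x₀).comp π) ?_ z
  · simpa using h
  intro x y
  simp only [AddMonoidHom.comp_apply, LinearMap.toAddMonoidHom_coe, AddMonoidHom.sub_apply,
    AddMonoidHom.id_apply, hπ]
  rw [wedge2Map_mk, TensorProduct.map_tmul, wedge2Map_mk, TensorProduct.map_tmul]
  rw [show ((augKer X).subtype.toIntLinearMap (pmap x₀ (Pi.single x 1)) : X → ℤ)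
      = Pi.single x 1 - Pi.single x₀ 1 from p_single x₀ x,
    show ((augKer X).subtype.toIntLinearMap (pmap x₀ (Pi.single y 1)) : X → ℤ)
      = Pi.single y 1 - Pi.single x₀ 1 from p_single x₀ y]
  rw [show smap x₀ (diffElt X x y)
      = (wedSpan (X → ℤ)).mkQ ((Pi.single x 1 - Pi.single y 1) ⊗ₜ[ℤ] Pi.single x₀ 1) from rfl]
  rw [← map_sub]
  rw [Submodule.mkQ_apply, Submodule.mkQ_apply, Submodule.Quotient.eq]
  have hexp : (Pi.single x 1 - Pi.single x₀ 1) ⊗ₜ[ℤ] (Pi.single y 1 - Pi.single x₀ 1)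
      - (Pi.single x 1 ⊗ₜ[ℤ] Pi.single y 1
        - (Pi.single x 1 - Pi.single y 1) ⊗ₜ[ℤ] (Pi.single x₀ 1 : X → ℤ))
      = ((Pi.single x₀ 1 : X → ℤ) ⊗ₜ[ℤ] (Pi.single x₀ 1 : X → ℤ)
          + Pi.single x₀ 1 ⊗ₜ[ℤ] Pi.single x₀ 1
          + Pi.single y 1 ⊗ₜ[ℤ] Pi.single y 1)
        - ((Pi.single x₀ 1 + Pi.single y 1) ⊗ₜ[ℤ] ((Pi.single x₀ 1 : X → ℤ) + Pi.single y 1)) := by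
    simp only [TensorProduct.sub_tmul, TensorProduct.tmul_sub, TensorProduct.add_tmul,
      TensorProduct.tmul_add]
    abel
  rw [hexp, wedSpan]
  refine sub_mem (add_mem (add_mem ?_ ?_) ?_) ?_
  · exact Submodule.subset_span ⟨Pi.single x₀ 1, rfl⟩
  · exact Submodule.subset_span ⟨Pi.single x₀ 1, rfl⟩
  · exact Submodule.subset_span ⟨Pi.single y 1, rfl⟩
  · exact Submodule.subset_span ⟨Pi.single x₀ 1 + Pi.single y 1, rfl⟩

private theorem wq_subsingleton {M : Type} [AddCommGroup M] [Subsingleton M] :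
    Subsingleton (Wedge2Q M) := by
  have hT : ∀ t : M ⊗[ℤ] M, t = 0 := by
    intro t
    induction t using TensorProduct.induction_on with
    | zero => rfl
    | add a b ha hb => rw [ha, hb, add_zero]
    | tmul a b => rw [Subsingleton.elim a 0, TensorProduct.zero_tmul]
  constructor
  intro a b
  obtain ⟨t, rfl⟩ := (wedSpan M).mkQ_surjective a
  obtain ⟨t', rfl⟩ := (wedSpan M).mkQ_surjective b
  rw [hT t, hT t']

private theorem perm_smul_single {G : Type} [Group G] [MulAction G X] (g : G) (x : X) :
    g • (Pi.single x 1 : X → ℤ) = Pi.single (g • x) 1 := by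
  funext y
  rw [perm_smul_def]
  simp only [Pi.single_apply, inv_smul_eq_iff]

private theorem tsmul_tmul {G : Type} [Group G] [MulAction G X] (g : G) (a b : X → ℤ) :
    g • (a ⊗ₜ[ℤ] b : (X → ℤ) ⊗[ℤ] (X → ℤ)) = (g • a) ⊗ₜ[ℤ] (g • b) := by
  rw [tsmul_def, TensorProduct.map_tmul]
  rfl

end AuxSec

open TensorProduct in
theorem stmt_8 (G : Type) [Group G] (X : Type) [MulAction G X] [Fintype X] [DecidableEq X]
    (π : Wedge2Q (X → ℤ) →+ (augKer X))
    (hπ : ∀ x x' : X, π ((wedSpan (X → ℤ)).mkQ (Pi.single x 1 ⊗ₜ[ℤ] Pi.single x' 1)) =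
        diffElt X x x') :
    IsEquivMapP G π ∧ Function.Surjective π ∧
    Function.Injective (wedge2Map ((augKer X).subtype.toIntLinearMap)) ∧
    ((wedge2Map ((augKer X).subtype.toIntLinearMap)).toAddMonoidHom).range = π.ker := by
  classical
  refine ⟨?_, ?_, ?_, ?_⟩
  · -- equivariance
    intro g m
    refine wext (π.comp (DistribMulAction.toAddMonoidHom (Wedge2Q (X → ℤ)) g))
      ((DistribMulAction.toAddMonoidHom (augKer X) g).comp π) (fun x y => ?_) m
    simp only [AddMonoidHom.comp_apply, DistribMulAction.toAddMonoidHom_apply]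
    rw [wedge2_smul_mk G (X → ℤ) g, tsmul_tmul, perm_smul_single, perm_smul_single, hπ, hπ]
    apply Subtype.ext
    rw [show ((g • diffElt X x y : augKer X) : X → ℤ)
        = g • ((diffElt X x y : augKer X) : X → ℤ) from rfl]
    show Pi.single (g • x) 1 - Pi.single (g • y) 1 = g • (Pi.single x 1 - Pi.single y 1)
    rw [smul_sub, perm_smul_single, perm_smul_single]
  · -- surjectivity
    intro a
    rcases isEmpty_or_nonempty X with hX | hX
    · haveI := hX
      exact ⟨0, Subsingleton.elim _ _⟩
    · obtain ⟨x₀⟩ := hX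
      refine ⟨(wedSpan (X → ℤ)).mkQ ((a : X → ℤ) ⊗ₜ[ℤ] Pi.single x₀ 1), ?_⟩
      apply Subtype.ext
      rw [pi_formula π hπ]
      show (∑ x, (Pi.single x₀ (1:ℤ) : X → ℤ) x) • (a : X → ℤ)
          - (∑ x, (a : X → ℤ) x) • Pi.single x₀ 1 = (a : X → ℤ)
      rw [sum_single_one, one_smul, show ∑ x, (a : X → ℤ) x = 0 from a.2, zero_smul, sub_zero]
  · -- injectivity
    rcases isEmpty_or_nonempty X with hX | hX
    · haveI := hX
      haveI : Subsingleton (Wedge2Q (augKer X)) := wq_subsingleton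
      intro z z' _
      exact Subsingleton.elim _ _
    · obtain ⟨x₀⟩ := hX
      intro z z' h
      have h2 := congrArg (wedge2Map (pmap x₀)) h
      rwa [r_i, r_i] at h2
  · -- exactness
    ext z
    simp only [AddMonoidHom.mem_range, AddMonoidHom.mem_ker, LinearMap.toAddMonoidHom_coe]
    constructor
    · rintro ⟨w, rfl⟩
      exact pi_iota π hπ w
    · intro hz
      rcases isEmpty_or_nonempty X with hX | hX
      · haveI := hX
        haveI : Subsingleton (Wedge2Q (X → ℤ)) := wq_subsingleton
        haveI : Subsingleton (Wedge2Q (augKer X)) := wq_subsingleton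
        exact ⟨0, Subsingleton.elim _ _⟩
      · obtain ⟨x₀⟩ := hX
        exact ⟨wedge2Map (pmap x₀) z, by rw [key π hπ x₀ z, hz, map_zero, sub_zero]⟩
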